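/- Let W ∈ ℝ^{n×ℓ} be a real matrix factored as W = U Σ Vᵀ with U ∈ ℝ^{n×m}, Σ ∈ ℝ^{m×m}, V ∈ ℝ^{ℓ×m}. Given a new sample vector u ∈ ℝⁿ, set c := Uᵀu, r̂ := u − Uc, ρ := ‖r̂‖₂, and assume r̂ ≠ 0, and let r := r̂/ρ. Then the augmented matrix obtained by appending u as a new last column to W admits the exact factorization [W | u] = [U | r] · [[Σ, c],[0, ρ]] · [[V, 0],[0, 1]]ᵀ, where [U | r] ∈ ℝ^{n×(m+1)} appends r as last column to U, [[Σ, c],[0, ρ]] ∈ ℝ^{(m+1)×(m+1)} is the block matrix with blocks Σ, c, zero row and scalar ρ, and [[V,0],[0,1]] ∈ ℝ^{(ℓ+1)×(m+1)} is the block-diagonal padding of V by the 1×1 identity. -/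

import Mathlib

open Matrix MeasureTheory

def appendCol {n ℓ : ℕ} (W : Matrix (Fin n) (Fin ℓ) ℝ) (u : Fin n → ℝ) :
    Matrix (Fin n) (Fin ℓ ⊕ Unit) ℝ :=
  Matrix.of fun i => Sum.elim (W i) fun _ => u i

/-- One update step of Brand's online SVD is exact: appending a new sample
column `u` to `W = U Σ Vᵀ` gives the padded factorization
`[W | u] = [U | r] · [[Σ, c],[0, ρ]] · [[V, 0],[0, 1]]ᵀ`. -/
theorem online_svd_pad_exact {n ℓ m : ℕ}
    (W : Matrix (Fin n) (Fin ℓ) ℝ) (U : Matrix (Fin n) (Fin m) ℝ)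
    (S : Matrix (Fin m) (Fin m) ℝ) (V : Matrix (Fin ℓ) (Fin m) ℝ)
    (hW : W = U * S * Vᵀ)
    (u : Fin n → ℝ)
    (c : Fin m → ℝ) (hc : c = Uᵀ *ᵥ u)
    (rhat : Fin n → ℝ) (hrhat : rhat = u - U *ᵥ c)
    (hne : rhat ≠ 0)
    (ρ : ℝ) (hρ : ρ = ‖(WithLp.equiv 2 (Fin n → ℝ)).symm rhat‖)
    (r : Fin n → ℝ) (hr : r = ρ⁻¹ • rhat) :
    appendCol W u =
      appendCol U r *
        Matrix.fromBlocks S (Matrix.of fun i (_ : Unit) => c i) 0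
          (Matrix.of fun (_ : Unit) (_ : Unit) => ρ) *
        (Matrix.fromBlocks V 0 0 1)ᵀ := by
  have hρ0 : ρ ≠ 0 := by
    rw [hρ]
    simp only [ne_eq, norm_eq_zero]
    intro h
    apply hne
    exact ((WithLp.equiv 2 (Fin n → ℝ)).symm.injective (by simpa using h))
  have hrr : ∀ i, ρ * r i = rhat i := by
    intro i
    rw [hr]
    simp [mul_comm ρ, inv_mul_cancel₀ hρ0, mul_assoc]
    field_simp
  ext i k
  erw [Matrix.mul_apply]
  cases k with
  | inl j =>
      simp [appendCol, hW, Matrix.mul_apply, Fintype.sum_sum_type, Finset.sum_mul,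
        Finset.mul_sum]
  | inr j =>
      have hu : u i = (U *ᵥ c) i + ρ * r i := by
        rw [hrr, hrhat]; simp
      simp [appendCol, Matrix.mul_apply, Fintype.sum_sum_type, hu, Matrix.mulVec, dotProduct, mul_comm]
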